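/- Let φ be a real number with 0 < φ ≤ 1, let M be a real number with M > 1, let g be a positive natural number with 2g ≥ 3·log₂(M)/φ, and let a : ℕ → ℝ satisfy a(2g) ≥ 1 and a(g) ≤ M. Then there exists a natural number j with g < j ≤ 2g such that a(j−1) < (1+φ)·a(j). -/

import Mathlib

/-- Let `φ` be real with `0 < φ ≤ 1`, `M` real with `M > 1`, `g` a positive
natural number with `2g ≥ 3·log₂(M)/φ`, and `a : ℕ → ℝ` with `a(2g) ≥ 1` and `a(g) ≤ M`.
Then there exists a natural number `j` with `g < j ≤ 2g` such that
`a(j-1) < (1+φ)·a(j)`. -/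
theorem stmt10 (φ M : ℝ) (hφ0 : 0 < φ) (hφ1 : φ ≤ 1) (hM : 1 < M)
    (g : ℕ) (hg : 0 < g) (hgM : (2 * g : ℝ) ≥ 3 * Real.logb 2 M / φ)
    (a : ℕ → ℝ) (htop : a (2 * g) ≥ 1) (hmid : a g ≤ M) :
    ∃ j : ℕ, g < j ∧ j ≤ 2 * g ∧ a (j - 1) < (1 + φ) * a j := by
  by_contra h
  push_neg at h
  have hφ' : (0:ℝ) < 1 + φ := by linarith
  have key : ∀ k, k ≤ g → (1+φ)^k * a (2*g) ≤ a (2*g - k) := by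
    intro k hk
    induction k with
    | zero => simp
    | succ n ih =>
      have hn : n ≤ g := Nat.le_of_succ_le hk
      have ih' := ih hn
      have hj1 : g < 2*g - n := by omega
      have hj2 : 2*g - n ≤ 2*g := by omega
      have hh := h (2*g - n) hj1 hj2
      have heq : 2*g - n - 1 = 2*g - (n+1) := by omega
      rw [heq] at hh
      have hpow : (0:ℝ) < (1+φ)^n := pow_pos hφ' n
      calc (1+φ)^(n+1) * a (2*g) = (1+φ) * ((1+φ)^n * a (2*g)) := by ring
        _ ≤ (1+φ) * a (2*g - n) := by nlinarith
        _ ≤ a (2*g - (n+1)) := hh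
  have hkey := key g (le_refl g)
  have hgg : 2*g - g = g := by omega
  rw [hgg] at hkey
  have h1 : (1+φ)^g ≤ a g := by nlinarith [pow_pos hφ' g]
  -- now show M < (1+φ)^g
  have hlogM : 0 < Real.log M := Real.log_pos hM
  have hlog2 : 0 < Real.log 2 := Real.log_pos one_lt_two
  have hgφ : (3/2) * (Real.log M / Real.log 2) ≤ φ * g := by
    rw [ge_iff_le, div_le_iff₀ hφ0] at hgM
    rw [Real.logb, ] at hgM
    nlinarith
  -- log(1+φ) ≥ φ/2
  have hloglb : φ / 2 ≤ Real.log (1 + φ) := by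
    have h2 : Real.log (1/(1+φ)) ≤ 1/(1+φ) - 1 :=
      Real.log_le_sub_one_of_pos (by positivity)
    rw [Real.log_div one_ne_zero (ne_of_gt hφ'), Real.log_one] at h2
    have h3 : φ / (1+φ) ≤ Real.log (1+φ) := by
      have : 1/(1+φ) - 1 = -(φ/(1+φ)) := by field_simp; ring
      rw [this] at h2
      linarith
    have h4 : φ / 2 ≤ φ / (1+φ) := by
      apply div_le_div_of_nonneg_left (le_of_lt hφ0) hφ' (by linarith)
    linarith
  have hlt : Real.log M < (g:ℝ) * Real.log (1+φ) := by
    have hg2 : Real.log 2 < 3/4 := by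
      have := Real.log_two_lt_d9
      linarith
    have h5 : (g:ℝ) * (φ/2) ≤ (g:ℝ) * Real.log (1+φ) := by
      apply mul_le_mul_of_nonneg_left hloglb (Nat.cast_nonneg g)
    have h6 : (3/4) * (Real.log M / Real.log 2) ≤ (g:ℝ) * (φ/2) := by linarith
    have h7 : Real.log M < (3/4) * (Real.log M / Real.log 2) := by
      rw [mul_div_assoc', lt_div_iff₀ hlog2]
      nlinarith
    linarith
  have hMlt : M < (1+φ)^g := by
    have : Real.log M < Real.log ((1+φ)^g) := by
      rw [Real.log_pow]; exact_mod_cast hlt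
    exact (Real.log_lt_log_iff (by linarith) (pow_pos hφ' g)).mp this
  linarith
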